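/- arXiv:2211.04909 — 3 statements merged into one kernel-verified Lean document; each statement's English description precedes it below -/
import Mathlib

section
/- For HKVs ξ_i, ξ_j on ℝⁿ with respect to η (with homothety constants λ_i, λ_j), and for any x, p ∈ ℝⁿ, the quadratic charge along the straight line t ↦ x + t p, namely f(t) = η(ξ_i(x + t p), ξ_j(x + t p)), has constant second derivative: f''(t) = 2 η(Dξ_i(x)p, Dξ_j(x)p) for all t ∈ ℝ. -/
noncomputable section

/-- The bilinear form `η` on `ℝⁿ` is symmetric. -/
def IsSymmForm {n : ℕ} (η : (Fin n → ℝ) →ₗ[ℝ] (Fin n → ℝ) →ₗ[ℝ] ℝ) : Prop :=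
  ∀ v w : Fin n → ℝ, η v w = η w v

/-- The bilinear form `η` on `ℝⁿ` is nondegenerate. -/
def IsNondegForm {n : ℕ} (η : (Fin n → ℝ) →ₗ[ℝ] (Fin n → ℝ) →ₗ[ℝ] ℝ) : Prop :=
  ∀ v : Fin n → ℝ, (∀ w : Fin n → ℝ, η v w = 0) → v = 0

/-- `ξ` is a homothetic Killing vector of the constant (flat) metric `η` on `ℝⁿ` with
homothety constant `lam`: it is a smooth vector field with
`η(Dξ(x)v, w) + η(v, Dξ(x)w) = lam · η(v, w)` for all `x, v, w`. -/
def IsFlatHKV {n : ℕ} (η : (Fin n → ℝ) →ₗ[ℝ] (Fin n → ℝ) →ₗ[ℝ] ℝ)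
    (ξ : (Fin n → ℝ) → Fin n → ℝ) (lam : ℝ) : Prop :=
  ContDiff ℝ (⊤ : ℕ∞) ξ ∧
    ∀ x v w : Fin n → ℝ,
      η (fderiv ℝ ξ x v) w + η v (fderiv ℝ ξ x w) = lam * η v w

end

section Aux

variable {n : ℕ}

/-- `η` as a continuous bilinear map. -/
noncomputable def etaC (η : (Fin n → ℝ) →ₗ[ℝ] (Fin n → ℝ) →ₗ[ℝ] ℝ) :
    (Fin n → ℝ) →L[ℝ] (Fin n → ℝ) →L[ℝ] ℝ :=
  LinearMap.toContinuousLinearMap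
    ((LinearMap.toContinuousLinearMap :
        ((Fin n → ℝ) →ₗ[ℝ] ℝ) ≃ₗ[ℝ] ((Fin n → ℝ) →L[ℝ] ℝ)).toLinearMap.comp η)

@[simp] lemma etaC_apply (η : (Fin n → ℝ) →ₗ[ℝ] (Fin n → ℝ) →ₗ[ℝ] ℝ)
    (v w : Fin n → ℝ) : etaC η v w = η v w := rfl

/-- An HKV of a flat metric has vanishing second derivative. -/
lemma flat_hkv_snd_deriv_zero {n : ℕ}
    (η : (Fin n → ℝ) →ₗ[ℝ] (Fin n → ℝ) →ₗ[ℝ] ℝ)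
    (hsymm : IsSymmForm η) (hnd : IsNondegForm η)
    (ξ : (Fin n → ℝ) → Fin n → ℝ) (lam : ℝ)
    (hξ : IsFlatHKV η ξ lam) (x : Fin n → ℝ) :
    fderiv ℝ (fderiv ℝ ξ) x = 0 := by
  obtain ⟨hsm, hkv⟩ := hξ
  have hd1 : Differentiable ℝ ξ := hsm.differentiable (by simp)
  have hsm2 : ContDiff ℝ (⊤ : ℕ∞) (fderiv ℝ ξ) := hsm.fderiv_right (by exact_mod_cast le_top)
  have hd2 : Differentiable ℝ (fderiv ℝ ξ) := hsm2.differentiable (by simp)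
  set D2 := fderiv ℝ (fderiv ℝ ξ) x with hD2
  -- symmetry of second derivative
  have hsymm2 : ∀ u v : Fin n → ℝ, D2 u v = D2 v u :=
    second_derivative_symmetric (fun y => (hd1 y).hasFDerivAt) (hd2 x).hasFDerivAt
  -- the basic derivative computation
  have hder : ∀ v w : Fin n → ℝ,
      HasFDerivAt (fun y => η (fderiv ℝ ξ y v) w)
        (((LinearMap.toContinuousLinearMap (η.flip w)).comp
            (ContinuousLinearMap.apply ℝ (Fin n → ℝ) v)).comp D2) x := by
    intro v w
    exact (((LinearMap.toContinuousLinearMap (η.flip w)).comp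
        (ContinuousLinearMap.apply ℝ (Fin n → ℝ) v)).hasFDerivAt).comp x (hd2 x).hasFDerivAt
  -- antisymmetry in last two slots
  have hanti : ∀ u v w : Fin n → ℝ, η (D2 u v) w + η (D2 u w) v = 0 := by
    intro u v w
    have hconst : (fun y => η (fderiv ℝ ξ y v) w + η (fderiv ℝ ξ y w) v)
        = fun _ => lam * η v w := by
      funext y
      have := hkv y v w
      rw [hsymm v (fderiv ℝ ξ y w)] at this
      exact this
    have hsum : HasFDerivAt (fun y => η (fderiv ℝ ξ y v) w + η (fderiv ℝ ξ y w) v)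
        ((((LinearMap.toContinuousLinearMap (η.flip w)).comp
            (ContinuousLinearMap.apply ℝ (Fin n → ℝ) v)).comp D2)
          + (((LinearMap.toContinuousLinearMap (η.flip v)).comp
            (ContinuousLinearMap.apply ℝ (Fin n → ℝ) w)).comp D2)) x :=
      (hder v w).add (hder w v)
    rw [hconst] at hsum
    have h0 := hsum.fderiv
    rw [fderiv_const_apply] at h0
    have := ContinuousLinearMap.ext_iff.mp h0 u
    simpa using this.symm
  have hzero : ∀ u v w : Fin n → ℝ, η (D2 u v) w = 0 := by
    intro u v w
    have h1 : η (D2 u v) w = -η (D2 u w) v := by linarith [hanti u v w]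
    have e1 : η (D2 u v) w = -η (D2 u w) v := h1
    have e2 : η (D2 u w) v = η (D2 w u) v := by rw [hsymm2 u w]
    have e3 : η (D2 w u) v = -η (D2 w v) u := by linarith [hanti w u v]
    have e4 : η (D2 w v) u = η (D2 v w) u := by rw [hsymm2 w v]
    have e5 : η (D2 v w) u = -η (D2 v u) w := by linarith [hanti v w u]
    have e6 : η (D2 v u) w = η (D2 u v) w := by rw [hsymm2 v u]
    linarith
  ext u v
  have : D2 u v = 0 := hnd _ (fun w => hzero u v w)
  simp [this]

end Aux


/-- For flat HKVs `ξ_i, ξ_j`, the quadratic charge along the straight line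
`t ↦ x + t p`, namely `f(t) = η(ξ_i(x + t p), ξ_j(x + t p))`, has constant second derivative
`f''(t) = 2 η(Dξ_i(x) p, Dξ_j(x) p)`. -/
theorem flat_hkv_quadCharge_second_deriv {n : ℕ} (hn : 1 ≤ n)
    (η : (Fin n → ℝ) →ₗ[ℝ] (Fin n → ℝ) →ₗ[ℝ] ℝ)
    (hsymm : IsSymmForm η) (hnd : IsNondegForm η)
    (ξi ξj : (Fin n → ℝ) → Fin n → ℝ) (lami lamj : ℝ)
    (hi : IsFlatHKV η ξi lami) (hj : IsFlatHKV η ξj lamj) :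
    ∀ x p : Fin n → ℝ, ∀ t : ℝ,
      deriv (deriv (fun s => η (ξi (x + s • p)) (ξj (x + s • p)))) t
        = 2 * η (fderiv ℝ ξi x p) (fderiv ℝ ξj x p) := by
  intro x p t
  have hdi : Differentiable ℝ ξi := hi.1.differentiable (by simp)
  have hdj : Differentiable ℝ ξj := hj.1.differentiable (by simp)
  -- fderiv of each field is constant
  have hconsti : ∀ y : Fin n → ℝ, fderiv ℝ ξi y = fderiv ℝ ξi x :=
    fun y => is_const_of_fderiv_eq_zero ((hi.1.fderiv_right (by exact_mod_cast le_top) : ContDiff ℝ (⊤:ℕ∞) (fderiv ℝ ξi)).differentiable (by simp))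
      (flat_hkv_snd_deriv_zero η hsymm hnd ξi lami hi) y x
  have hconstj : ∀ y : Fin n → ℝ, fderiv ℝ ξj y = fderiv ℝ ξj x :=
    fun y => is_const_of_fderiv_eq_zero
      ((hj.1.fderiv_right (by exact_mod_cast le_top) :
          ContDiff ℝ (⊤:ℕ∞) (fderiv ℝ ξj)).differentiable (by simp))
      (flat_hkv_snd_deriv_zero η hsymm hnd ξj lamj hj) y x
  set Ai := fderiv ℝ ξi x with hAi
  set Aj := fderiv ℝ ξj x with hAj
  -- derivative of the line
  have hline : ∀ s : ℝ, HasDerivAt (fun s : ℝ => x + s • p) p s := by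
    intro s
    simpa using ((hasDerivAt_id s).smul_const p).const_add x
  have hci : ∀ s : ℝ, HasDerivAt (fun s : ℝ => ξi (x + s • p)) (Ai p) s := by
    intro s
    have h := ((hdi (x + s • p)).hasFDerivAt).comp_hasDerivAt s (hline s)
    rw [hconsti (x + s • p)] at h
    exact h
  have hcj : ∀ s : ℝ, HasDerivAt (fun s : ℝ => ξj (x + s • p)) (Aj p) s := by
    intro s
    have h := ((hdj (x + s • p)).hasFDerivAt).comp_hasDerivAt s (hline s)
    rw [hconstj (x + s • p)] at h
    exact h
  have hfi : ∀ s : ℝ, HasDerivAt (fun s : ℝ => etaC η (ξi (x + s • p))) (etaC η (Ai p)) s := by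
    intro s
    exact ((etaC η).hasFDerivAt).comp_hasDerivAt s (hci s)
  -- first derivative
  have hf : ∀ s : ℝ, HasDerivAt (fun s : ℝ => η (ξi (x + s • p)) (ξj (x + s • p)))
      (η (Ai p) (ξj (x + s • p)) + η (ξi (x + s • p)) (Aj p)) s := by
    intro s
    have h := (hfi s).clm_apply (hcj s)
    simpa using h
  have hderiv1 : deriv (fun s : ℝ => η (ξi (x + s • p)) (ξj (x + s • p)))
      = fun s : ℝ => η (Ai p) (ξj (x + s • p)) + η (ξi (x + s • p)) (Aj p) :=
    funext fun s => (hf s).deriv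
  rw [hderiv1]
  -- second derivative
  have hg1 : HasDerivAt (fun s : ℝ => η (Ai p) (ξj (x + s • p))) (η (Ai p) (Aj p)) t := by
    have h := ((etaC η (Ai p)).hasFDerivAt).comp_hasDerivAt t (hcj t)
    simpa [Function.comp_def] using h
  have hg2 : HasDerivAt (fun s : ℝ => η (ξi (x + s • p)) (Aj p)) (η (Ai p) (Aj p)) t := by
    have h := (hfi t).clm_apply (hasDerivAt_const t (Aj p))
    simpa using h
  have := (hg1.fun_add hg2).deriv
  rw [this]
  ring
end

section
/- In flat space, the third time derivative of the quadratic charge V_{ij} vanishes along geodesics: for HKVs ξ_i, ξ_j on ℝⁿ with respect to η (with homothety constants λ_i, λ_j) and any x, p ∈ ℝⁿ, the function f(t) = η(ξ_i(x + t p), ξ_j(x + t p)) satisfies f'''(t) = 0 for all t; explicitly, f(t) = η(ξ_i(x), ξ_j(x)) + t [η(Dξ_i(x)p, ξ_j(x)) + η(ξ_i(x), Dξ_j(x)p)] + t² η(Dξ_i(x)p, Dξ_j(x)p). -/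
section Aux

variable {n : ℕ}

/-- The second derivative of a flat HKV vanishes. -/
lemma hkv_snd_fderiv_zero (η : (Fin n → ℝ) →ₗ[ℝ] (Fin n → ℝ) →ₗ[ℝ] ℝ)
    (hsymm : IsSymmForm η) (hnd : IsNondegForm η)
    {ξ : (Fin n → ℝ) → Fin n → ℝ} {lam : ℝ} (h : IsFlatHKV η ξ lam)
    (x : Fin n → ℝ) : fderiv ℝ (fderiv ℝ ξ) x = 0 := by
  have hdiff : Differentiable ℝ ξ := h.1.differentiable (by simp)
  have hC : ContDiff ℝ (⊤ : ℕ∞) (fderiv ℝ ξ) :=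
    h.1.fderiv_right (by exact_mod_cast le_top)
  have hCdiff : Differentiable ℝ (fderiv ℝ ξ) := hC.differentiable (by simp)
  set A := fderiv ℝ (fderiv ℝ ξ) x with hA
  -- key identity: η (A u v) w + η v (A u w) = 0
  have key : ∀ u v w : Fin n → ℝ, η (A u v) w + η v (A u w) = 0 := by
    intro u v w
    let Φ : ((Fin n → ℝ) →L[ℝ] (Fin n → ℝ)) →ₗ[ℝ] ℝ :=
      { toFun := fun L => η (L v) w + η v (L w)
        map_add' := by
          intro L L'
          simp [ContinuousLinearMap.add_apply, map_add, LinearMap.add_apply]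
          ring
        map_smul' := by
          intro c L
          simp [ContinuousLinearMap.smul_apply, map_smul, LinearMap.smul_apply,
            smul_eq_mul]
          ring }
    let Φc : ((Fin n → ℝ) →L[ℝ] (Fin n → ℝ)) →L[ℝ] ℝ := LinearMap.toContinuousLinearMap (𝕜 := ℝ) Φ
    have hg1 : HasFDerivAt (fun y => Φc (fderiv ℝ ξ y)) (Φc.comp A) x :=
      Φc.hasFDerivAt.comp x (hCdiff x).hasFDerivAt
    have hgc : (fun y => Φc (fderiv ℝ ξ y)) = fun _ => lam * η v w := by
      funext y
      exact h.2 y v w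
    have hg2 : HasFDerivAt (fun y => Φc (fderiv ℝ ξ y)) (0 : (Fin n → ℝ) →L[ℝ] ℝ) x := by
      rw [hgc]; exact hasFDerivAt_const (lam * η v w) x
    have h0 : Φc.comp A = 0 := hg1.unique hg2
    have h0u := DFunLike.congr_fun h0 u
    simpa [Φc, Φ] using h0u
  have hsym2 : ∀ u v : Fin n → ℝ, A u v = A v u := by
    intro u v
    exact second_derivative_symmetric (fun y => (hdiff y).hasFDerivAt)
      (hCdiff x).hasFDerivAt u v
  -- braid argument: S u v w := η (A u v) w is symmetric in (u,v),
  -- antisymmetric in (v,w), hence zero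
  have hanti : ∀ u v w : Fin n → ℝ, η (A u v) w = - η (A u w) v := by
    intro u v w
    have := key u v w
    rw [hsymm v (A u w)] at this
    linarith
  have hS : ∀ u v w : Fin n → ℝ, η (A u v) w = 0 := by
    intro u v w
    have e1 : η (A u v) w = - η (A u w) v := hanti u v w
    have e2 : η (A u w) v = η (A w u) v := by rw [hsym2 u w]
    have e3 : η (A w u) v = - η (A w v) u := hanti w u v
    have e4 : η (A w v) u = η (A v w) u := by rw [hsym2 w v]
    have e5 : η (A v w) u = - η (A v u) w := hanti v w u
    have e6 : η (A v u) w = η (A u v) w := by rw [hsym2 v u]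
    linarith [e1, e2, e3, e4, e5, e6]
  have hAzero : ∀ u v : Fin n → ℝ, A u v = 0 := fun u v => hnd _ (hS u v)
  ext u v
  simp [hAzero u]

/-- A flat HKV is affine. -/
lemma hkv_affine (η : (Fin n → ℝ) →ₗ[ℝ] (Fin n → ℝ) →ₗ[ℝ] ℝ)
    (hsymm : IsSymmForm η) (hnd : IsNondegForm η)
    {ξ : (Fin n → ℝ) → Fin n → ℝ} {lam : ℝ} (h : IsFlatHKV η ξ lam)
    (x y : Fin n → ℝ) : ξ y = ξ x + fderiv ℝ ξ x (y - x) := by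
  have hdiff : Differentiable ℝ ξ := h.1.differentiable (by simp)
  have hC : ContDiff ℝ (⊤ : ℕ∞) (fderiv ℝ ξ) := h.1.fderiv_right (by exact_mod_cast le_top)
  have hCdiff : Differentiable ℝ (fderiv ℝ ξ) := hC.differentiable (by simp)
  have hconst : ∀ z, fderiv ℝ ξ z = fderiv ℝ ξ x := by
    intro z
    exact is_const_of_fderiv_eq_zero hCdiff
      (fun w => hkv_snd_fderiv_zero η hsymm hnd h w) z x
  set C := fderiv ℝ ξ x with hCdef
  have hg : ∀ z, fderiv ℝ (fun y => ξ y - C y) z = 0 := by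
    intro z
    have h1 : HasFDerivAt (fun y => ξ y - C y) (fderiv ℝ ξ z - C) z :=
      (hdiff z).hasFDerivAt.sub C.hasFDerivAt
    have : fderiv ℝ ξ z - C = 0 := by rw [hconst z]; simp
    rw [this] at h1
    exact h1.fderiv
  have hgdiff : Differentiable ℝ (fun y => ξ y - C y) :=
    hdiff.sub C.differentiable
  have := is_const_of_fderiv_eq_zero hgdiff hg y x
  have h2 : ξ y - C y = ξ x - C x := this
  have : ξ y = ξ x + (C y - C x) := by
    rw [eq_add_of_sub_eq h2.symm]; abel
  rw [this, ← map_sub]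

end Aux

/-- In flat space, the third time derivative of the quadratic charge
`V_{ij}` vanishes along geodesics: `f(t) = η(ξ_i(x + t p), ξ_j(x + t p))` has `f''' ≡ 0`;
explicitly, `f(t) = η(ξ_i(x), ξ_j(x)) + t [η(Dξ_i(x)p, ξ_j(x)) + η(ξ_i(x), Dξ_j(x)p)]
+ t² η(Dξ_i(x)p, Dξ_j(x)p)`. -/
theorem flat_hkv_quadCharge_third_deriv_vanishes {n : ℕ} (hn : 1 ≤ n)
    (η : (Fin n → ℝ) →ₗ[ℝ] (Fin n → ℝ) →ₗ[ℝ] ℝ)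
    (hsymm : IsSymmForm η) (hnd : IsNondegForm η)
    (ξi ξj : (Fin n → ℝ) → Fin n → ℝ) (lami lamj : ℝ)
    (hi : IsFlatHKV η ξi lami) (hj : IsFlatHKV η ξj lamj) :
    ∀ x p : Fin n → ℝ,
      (∀ t : ℝ,
        deriv (deriv (deriv (fun s => η (ξi (x + s • p)) (ξj (x + s • p))))) t = 0) ∧
      ∀ t : ℝ,
        η (ξi (x + t • p)) (ξj (x + t • p))
          = η (ξi x) (ξj x)
            + t * (η (fderiv ℝ ξi x p) (ξj x) + η (ξi x) (fderiv ℝ ξj x p))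
            + t ^ 2 * η (fderiv ℝ ξi x p) (fderiv ℝ ξj x p) := by
  intro x p
  have hval : ∀ t : ℝ,
      η (ξi (x + t • p)) (ξj (x + t • p))
        = η (ξi x) (ξj x)
          + t * (η (fderiv ℝ ξi x p) (ξj x) + η (ξi x) (fderiv ℝ ξj x p))
          + t ^ 2 * η (fderiv ℝ ξi x p) (fderiv ℝ ξj x p) := by
    intro t
    have hxi : ξi (x + t • p) = ξi x + t • fderiv ℝ ξi x p := by
      have := hkv_affine η hsymm hnd hi x (x + t • p)
      simpa [map_smul] using this
    have hxj : ξj (x + t • p) = ξj x + t • fderiv ℝ ξj x p := by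
      have := hkv_affine η hsymm hnd hj x (x + t • p)
      simpa [map_smul] using this
    rw [hxi, hxj]
    simp [map_add, map_smul, smul_eq_mul, LinearMap.add_apply, LinearMap.smul_apply]
    ring
  refine ⟨?_, hval⟩
  intro t
  set a := η (ξi x) (ξj x)
  set b := η (fderiv ℝ ξi x p) (ξj x) + η (ξi x) (fderiv ℝ ξj x p)
  set c := η (fderiv ℝ ξi x p) (fderiv ℝ ξj x p)
  have hfun : (fun s => η (ξi (x + s • p)) (ξj (x + s • p)))
      = fun s : ℝ => a + s * b + s ^ 2 * c := funext hval
  rw [hfun]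
  have d1 : deriv (fun s : ℝ => a + s * b + s ^ 2 * c) = fun s => b + (2 * s) * c := by
    funext s
    have h1 : HasDerivAt (fun s : ℝ => a + s * b) b s := by
      simpa using ((hasDerivAt_id s).mul_const b).const_add a
    have h2 : HasDerivAt (fun s : ℝ => s ^ 2 * c) (2 * s * c) s := by
      simpa using (hasDerivAt_pow 2 s).mul_const c
    exact (h1.add h2).deriv
  rw [d1]
  have d2 : deriv (fun s : ℝ => b + (2 * s) * c) = fun _ => 2 * c := by
    funext s
    have h1 : HasDerivAt (fun s : ℝ => (2 * s) * c) (2 * c) s := by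
      simpa using (((hasDerivAt_id s).const_mul 2).mul_const c)
    exact (h1.const_add b).deriv
  rw [d2]
  simp
end

section
/- Closure of the algebra of quadratic charges: let ξ_(1), …, ξ_(m) be homothetic Killing vectors on (U, g) with homothety constants λ_1, …, λ_m, set V_{ab}(x) = g_{μν}(x) ξ_a^μ(x) ξ_b^ν(x), and suppose that for some pair i, j there are real constants α^1, …, α^m with ξ_i^σ ∇_σ ξ_j^ν + ξ_j^σ ∇_σ ξ_i^ν = Σ_l α^l ξ_l^ν on U. Then for every k ∈ {1, …, m} and every x ∈ U, ξ_k^μ ∂_μ V_{ij}(x) = λ_i V_{jk}(x) + λ_j V_{ik}(x) − Σ_l α^l V_{lk}(x); that is, the derivative of V_{ij} along any of the ξ_k is a linear combination (with constant coefficients) of the functions V_{ab}. -/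
open scoped BigOperators

noncomputable section

/-- Partial derivative `∂_μ f` of a real-valued function on `ℝⁿ`
in the `μ`-th coordinate direction. -/
def pd {n : ℕ} (f : (Fin n → ℝ) → ℝ) (μ : Fin n) (x : Fin n → ℝ) : ℝ :=
  fderiv ℝ f x (Pi.single μ 1)

/-- Christoffel symbols `Γ^ρ_{μν} = ½ g^{ρσ}(∂_μ g_{σν} + ∂_ν g_{σμ} − ∂_σ g_{μν})`. -/
def christoffel {n : ℕ} (g : (Fin n → ℝ) → Matrix (Fin n) (Fin n) ℝ) (ρ μ ν : Fin n)
    (x : Fin n → ℝ) : ℝ :=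
  (1 / 2) * ∑ σ : Fin n, (g x)⁻¹ ρ σ *
    (pd (fun y => g y σ ν) μ x + pd (fun y => g y σ μ) ν x - pd (fun y => g y μ ν) σ x)

/-- Lowered covector field `ξ_ν = g_{νσ} ξ^σ`. -/
def lowerIdx {n : ℕ} (g : (Fin n → ℝ) → Matrix (Fin n) (Fin n) ℝ)
    (ξ : (Fin n → ℝ) → Fin n → ℝ) (ν : Fin n) (x : Fin n → ℝ) : ℝ :=
  ∑ σ : Fin n, g x ν σ * ξ x σ

/-- Covariant derivative of the lowered vector field: `∇_μ ξ_ν = ∂_μ ξ_ν − Γ^σ_{μν} ξ_σ`. -/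
def covLow {n : ℕ} (g : (Fin n → ℝ) → Matrix (Fin n) (Fin n) ℝ)
    (ξ : (Fin n → ℝ) → Fin n → ℝ) (μ ν : Fin n) (x : Fin n → ℝ) : ℝ :=
  pd (fun y => lowerIdx g ξ ν y) μ x - ∑ σ : Fin n, christoffel g σ μ ν x * lowerIdx g ξ σ x

/-- Covariant derivative of the vector field: `∇_μ ξ^ν = ∂_μ ξ^ν + Γ^ν_{μσ} ξ^σ`. -/
def covUp {n : ℕ} (g : (Fin n → ℝ) → Matrix (Fin n) (Fin n) ℝ)
    (ξ : (Fin n → ℝ) → Fin n → ℝ) (μ ν : Fin n) (x : Fin n → ℝ) : ℝ :=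
  pd (fun y => ξ y ν) μ x + ∑ σ : Fin n, christoffel g ν μ σ x * ξ x σ

/-- Second covariant derivative `∇_μ ∇_ν ξ_ρ` of the lowered vector field, i.e. the covariant
derivative of the `(0,2)`-tensor `∇_ν ξ_ρ`, with one Christoffel term per index. -/
def covLow2 {n : ℕ} (g : (Fin n → ℝ) → Matrix (Fin n) (Fin n) ℝ)
    (ξ : (Fin n → ℝ) → Fin n → ℝ) (μ ν ρ : Fin n) (x : Fin n → ℝ) : ℝ :=
  pd (fun y => covLow g ξ ν ρ y) μ x
    - ∑ σ : Fin n, christoffel g σ μ ν x * covLow g ξ σ ρ x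
    - ∑ σ : Fin n, christoffel g σ μ ρ x * covLow g ξ ν σ x

/-- Riemann curvature tensor
`R^ρ_{σμν} = ∂_μ Γ^ρ_{νσ} − ∂_ν Γ^ρ_{μσ} + Γ^ρ_{μλ} Γ^λ_{νσ} − Γ^ρ_{νλ} Γ^λ_{μσ}`. -/
def riemannUp {n : ℕ} (g : (Fin n → ℝ) → Matrix (Fin n) (Fin n) ℝ) (ρ σ μ ν : Fin n)
    (x : Fin n → ℝ) : ℝ :=
  pd (fun y => christoffel g ρ ν σ y) μ x - pd (fun y => christoffel g ρ μ σ y) ν x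
    + ∑ l : Fin n, christoffel g ρ μ l x * christoffel g l ν σ x
    - ∑ l : Fin n, christoffel g ρ ν l x * christoffel g l μ σ x

/-- Lowered Riemann curvature tensor `R_{ρσμν} = g_{ρκ} R^κ_{σμν}`. -/
def riemannLow {n : ℕ} (g : (Fin n → ℝ) → Matrix (Fin n) (Fin n) ℝ) (ρ σ μ ν : Fin n)
    (x : Fin n → ℝ) : ℝ :=
  ∑ κ : Fin n, g x ρ κ * riemannUp g κ σ μ ν x

/-- `g` is a smooth pseudo-Riemannian metric on `U`: smooth, symmetric and invertible there. -/
def IsMetricOn {n : ℕ} (U : Set (Fin n → ℝ))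
    (g : (Fin n → ℝ) → Matrix (Fin n) (Fin n) ℝ) : Prop :=
  (∀ μ ν : Fin n, ContDiffOn ℝ (⊤ : ℕ∞) (fun x => g x μ ν) U) ∧
    (∀ x ∈ U, (g x).IsSymm) ∧ (∀ x ∈ U, IsUnit (g x).det)

/-- `ξ` is a homothetic Killing vector of `g` on `U` with homothety constant `lam`:
it is a smooth vector field satisfying `∇_μ ξ_ν + ∇_ν ξ_μ = lam g_{μν}` on `U`. -/
def IsHKVOn {n : ℕ} (U : Set (Fin n → ℝ)) (g : (Fin n → ℝ) → Matrix (Fin n) (Fin n) ℝ)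
    (ξ : (Fin n → ℝ) → Fin n → ℝ) (lam : ℝ) : Prop :=
  (∀ ν : Fin n, ContDiffOn ℝ (⊤ : ℕ∞) (fun x => ξ x ν) U) ∧
    ∀ x ∈ U, ∀ μ ν : Fin n, covLow g ξ μ ν x + covLow g ξ ν μ x = lam * g x μ ν

/-- Lie bracket of vector fields: `[ξ, ζ]^ν = ξ^μ ∂_μ ζ^ν − ζ^μ ∂_μ ξ^ν`. -/
def lieBracket {n : ℕ} (ξ ζ : (Fin n → ℝ) → Fin n → ℝ) (x : Fin n → ℝ) (ν : Fin n) : ℝ :=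
  ∑ μ : Fin n, ξ x μ * pd (fun y => ζ y ν) μ x - ∑ μ : Fin n, ζ x μ * pd (fun y => ξ y ν) μ x

/-- Quadratic charge `V_{ij} = g_{μν} ξ_i^μ ξ_j^ν`. -/
def quadCharge {n : ℕ} (g : (Fin n → ℝ) → Matrix (Fin n) (Fin n) ℝ)
    (ξi ξj : (Fin n → ℝ) → Fin n → ℝ) (x : Fin n → ℝ) : ℝ :=
  ∑ μ : Fin n, ∑ ν : Fin n, g x μ ν * ξi x μ * ξj x ν

end
section helpers
variable {n : ℕ}

lemma pd_sum {ι : Type*} (s : Finset ι) (f : ι → (Fin n → ℝ) → ℝ) (μ : Fin n) (x : Fin n → ℝ)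
    (hf : ∀ i ∈ s, DifferentiableAt ℝ (f i) x) :
    pd (fun y => ∑ i ∈ s, f i y) μ x = ∑ i ∈ s, pd (f i) μ x := by
  unfold pd
  rw [fderiv_fun_sum hf, ContinuousLinearMap.sum_apply]

lemma pd_mul (f h : (Fin n → ℝ) → ℝ) (μ : Fin n) (x : Fin n → ℝ)
    (hf : DifferentiableAt ℝ f x) (hh : DifferentiableAt ℝ h x) :
    pd (fun y => f y * h y) μ x = pd f μ x * h x + f x * pd h μ x := by
  unfold pd
  rw [fderiv_fun_mul hf hh]
  simp only [ContinuousLinearMap.add_apply, ContinuousLinearMap.smul_apply, smul_eq_mul]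
  ring

variable {U : Set (Fin n → ℝ)} {g : (Fin n → ℝ) → Matrix (Fin n) (Fin n) ℝ}

lemma diffAt_of_cd (hU : IsOpen U) {f : (Fin n → ℝ) → ℝ}
    (hf : ContDiffOn ℝ (⊤ : ℕ∞) f U) {x : Fin n → ℝ} (hx : x ∈ U) :
    DifferentiableAt ℝ f x :=
  (hf.contDiffAt (hU.mem_nhds hx)).differentiableAt (by simp)

lemma pd_g_symm (hU : IsOpen U) (hg : IsMetricOn U g) {x : Fin n → ℝ} (hx : x ∈ U)
    (μ ν σ : Fin n) :
    pd (fun y => g y μ ν) σ x = pd (fun y => g y ν μ) σ x := by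
  unfold pd
  have h : (fun y => g y μ ν) =ᶠ[nhds x] (fun y => g y ν μ) := by
    filter_upwards [hU.mem_nhds hx] with y hy
    exact (hg.2.1 y hy).apply ν μ
  rw [h.fderiv_eq]

lemma g_mul_inv (hg : IsMetricOn U g) {x : Fin n → ℝ} (hx : x ∈ U) (σ τ : Fin n) :
    ∑ ρ : Fin n, g x σ ρ * (g x)⁻¹ ρ τ = if σ = τ then 1 else 0 := by
  have h := Matrix.mul_nonsing_inv (g x) (hg.2.2 x hx)
  have h2 := congrFun (congrFun h σ) τ
  simpa [Matrix.mul_apply, Matrix.one_apply] using h2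

lemma christoffel_contract (hg : IsMetricOn U g) {x : Fin n → ℝ} (hx : x ∈ U) (ρ μ ν : Fin n) :
    ∑ σ : Fin n, g x ρ σ * christoffel g σ μ ν x
      = (1/2) * (pd (fun y => g y ρ ν) μ x + pd (fun y => g y ρ μ) ν x
          - pd (fun y => g y μ ν) ρ x) := by
  calc ∑ σ : Fin n, g x ρ σ * christoffel g σ μ ν x
      = ∑ σ : Fin n, ∑ τ : Fin n, (g x ρ σ * (g x)⁻¹ σ τ) * ((1/2) *
          (pd (fun y => g y τ ν) μ x + pd (fun y => g y τ μ) ν x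
            - pd (fun y => g y μ ν) τ x)) := by
        apply Finset.sum_congr rfl; intro σ _
        unfold christoffel
        simp only [Finset.mul_sum]
        apply Finset.sum_congr rfl; intro τ _; ring
    _ = ∑ τ : Fin n, (∑ σ : Fin n, g x ρ σ * (g x)⁻¹ σ τ) * ((1/2) *
          (pd (fun y => g y τ ν) μ x + pd (fun y => g y τ μ) ν x
            - pd (fun y => g y μ ν) τ x)) := by
        rw [Finset.sum_comm]
        exact Finset.sum_congr rfl fun τ _ => (Finset.sum_mul _ _ _).symm
    _ = _ := by
        simp only [fun τ => g_mul_inv hg hx ρ τ, ite_mul, one_mul, zero_mul,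
          Finset.sum_ite_eq, Finset.mem_univ, if_true]

end helpers

section helpers2
variable {n : ℕ} {U : Set (Fin n → ℝ)} {g : (Fin n → ℝ) → Matrix (Fin n) (Fin n) ℝ}
  {ξ ξi ξj : (Fin n → ℝ) → Fin n → ℝ}

lemma diff_lowerIdx (hU : IsOpen U) (hg : IsMetricOn U g)
    (hξ : ∀ ν : Fin n, ContDiffOn ℝ (⊤ : ℕ∞) (fun x => ξ x ν) U)
    {x : Fin n → ℝ} (hx : x ∈ U) (ν : Fin n) :
    DifferentiableAt ℝ (fun y => lowerIdx g ξ ν y) x := by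
  unfold lowerIdx
  exact DifferentiableAt.fun_sum fun σ _ =>
    (diffAt_of_cd hU (hg.1 ν σ) hx).fun_mul (diffAt_of_cd hU (hξ σ) hx)

lemma pd_lowerIdx (hU : IsOpen U) (hg : IsMetricOn U g)
    (hξ : ∀ ν : Fin n, ContDiffOn ℝ (⊤ : ℕ∞) (fun x => ξ x ν) U)
    {x : Fin n → ℝ} (hx : x ∈ U) (μ ν : Fin n) :
    pd (fun y => lowerIdx g ξ ν y) μ x
      = ∑ σ : Fin n, (pd (fun y => g y ν σ) μ x * ξ x σ
          + g x ν σ * pd (fun y => ξ y σ) μ x) := by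
  unfold lowerIdx
  rw [pd_sum _ _ _ _ (fun σ _ =>
    (diffAt_of_cd hU (hg.1 ν σ) hx).fun_mul (diffAt_of_cd hU (hξ σ) hx))]
  exact Finset.sum_congr rfl fun σ _ =>
    pd_mul _ _ _ _ (diffAt_of_cd hU (hg.1 ν σ) hx) (diffAt_of_cd hU (hξ σ) hx)

lemma covLow_eq_contract (hU : IsOpen U) (hg : IsMetricOn U g)
    (hξ : ∀ ν : Fin n, ContDiffOn ℝ (⊤ : ℕ∞) (fun x => ξ x ν) U)
    {x : Fin n → ℝ} (hx : x ∈ U) (μ ν : Fin n) :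
    covLow g ξ μ ν x = ∑ σ : Fin n, g x ν σ * covUp g ξ μ σ x := by
  have key : ∀ ρ : Fin n, (∑ σ : Fin n, g x ρ σ * christoffel g σ μ ν x)
      + (∑ σ : Fin n, g x ν σ * christoffel g σ μ ρ x)
      = pd (fun y => g y ν ρ) μ x := by
    intro ρ
    rw [christoffel_contract hg hx ρ μ ν, christoffel_contract hg hx ν μ ρ,
      pd_g_symm hU hg hx ρ ν μ, pd_g_symm hU hg hx ρ μ ν, pd_g_symm hU hg hx μ ν ρ]
    ring
  have hA : ∑ σ : Fin n, christoffel g σ μ ν x * lowerIdx g ξ σ x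
      = ∑ ρ : Fin n, (∑ σ : Fin n, g x ρ σ * christoffel g σ μ ν x) * ξ x ρ := by
    unfold lowerIdx
    simp only [Finset.mul_sum, Finset.sum_mul]
    rw [Finset.sum_comm]
    refine Finset.sum_congr rfl fun ρ _ => Finset.sum_congr rfl fun σ _ => ?_
    rw [(hg.2.1 x hx).apply ρ σ]
    ring
  have hR : ∑ σ : Fin n, g x ν σ * covUp g ξ μ σ x
      = (∑ σ : Fin n, g x ν σ * pd (fun y => ξ y σ) μ x)
        + ∑ ρ : Fin n, (∑ σ : Fin n, g x ν σ * christoffel g σ μ ρ x) * ξ x ρ := by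
    unfold covUp
    simp only [mul_add, Finset.sum_add_distrib]
    congr 1
    simp only [Finset.mul_sum, Finset.sum_mul]
    rw [Finset.sum_comm]
    exact Finset.sum_congr rfl fun ρ _ => Finset.sum_congr rfl fun σ _ => by ring
  have hkey : ∑ σ : Fin n, pd (fun y => g y ν σ) μ x * ξ x σ
      = ∑ ρ : Fin n, ((∑ σ : Fin n, g x ρ σ * christoffel g σ μ ν x)
          + (∑ σ : Fin n, g x ν σ * christoffel g σ μ ρ x)) * ξ x ρ :=
    Finset.sum_congr rfl fun ρ _ => by rw [key ρ]
  unfold covLow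
  rw [pd_lowerIdx hU hg hξ hx μ ν, hA, hR, Finset.sum_add_distrib, hkey]
  simp only [add_mul, Finset.sum_add_distrib]
  ring

lemma pd_quadCharge (hU : IsOpen U) (hg : IsMetricOn U g)
    (hξi : ∀ ν : Fin n, ContDiffOn ℝ (⊤ : ℕ∞) (fun x => ξi x ν) U)
    (hξj : ∀ ν : Fin n, ContDiffOn ℝ (⊤ : ℕ∞) (fun x => ξj x ν) U)
    {x : Fin n → ℝ} (hx : x ∈ U) (μ : Fin n) :
    pd (quadCharge g ξi ξj) μ x
      = ∑ ν : Fin n, covUp g ξi μ ν x * lowerIdx g ξj ν x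
        + ∑ ν : Fin n, ξi x ν * covLow g ξj μ ν x := by
  have hfun : quadCharge g ξi ξj = fun y => ∑ ν : Fin n, ξi y ν * lowerIdx g ξj ν y := by
    funext y
    unfold quadCharge lowerIdx
    simp only [Finset.mul_sum]
    exact Finset.sum_congr rfl fun a _ => Finset.sum_congr rfl fun b _ => by ring
  rw [hfun, pd_sum _ _ _ _ (fun ν _ =>
    (diffAt_of_cd hU (hξi ν) hx).fun_mul (diff_lowerIdx hU hg hξj hx ν))]
  have hterm : ∀ ν : Fin n, pd (fun y => ξi y ν * lowerIdx g ξj ν y) μ x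
      = (covUp g ξi μ ν x - ∑ σ : Fin n, christoffel g ν μ σ x * ξi x σ) * lowerIdx g ξj ν x
        + ξi x ν * (covLow g ξj μ ν x
          + ∑ σ : Fin n, christoffel g σ μ ν x * lowerIdx g ξj σ x) := by
    intro ν
    rw [pd_mul _ _ _ _ (diffAt_of_cd hU (hξi ν) hx) (diff_lowerIdx hU hg hξj hx ν)]
    have h1 : pd (fun y => ξi y ν) μ x
        = covUp g ξi μ ν x - ∑ σ : Fin n, christoffel g ν μ σ x * ξi x σ := by
      unfold covUp; ring
    have h2 : pd (fun y => lowerIdx g ξj ν y) μ x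
        = covLow g ξj μ ν x + ∑ σ : Fin n, christoffel g σ μ ν x * lowerIdx g ξj σ x := by
      unfold covLow; ring
    rw [h1, h2]
  simp only [hterm, sub_mul, mul_add, Finset.sum_add_distrib, Finset.sum_sub_distrib]
  have hcancel : ∑ ν : Fin n, (∑ σ : Fin n, christoffel g ν μ σ x * ξi x σ) * lowerIdx g ξj ν x
      = ∑ ν : Fin n, ξi x ν * ∑ σ : Fin n, christoffel g σ μ ν x * lowerIdx g ξj σ x := by
    simp only [Finset.mul_sum, Finset.sum_mul]
    rw [Finset.sum_comm]
    exact Finset.sum_congr rfl fun a _ => Finset.sum_congr rfl fun b _ => by ring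
  rw [hcancel]
  ring

end helpers2

/-- Closure of the algebra of quadratic charges: if
`ξ_i^σ ∇_σ ξ_j^ν + ξ_j^σ ∇_σ ξ_i^ν = Σ_l α^l ξ_l^ν` on `U` for constants `α^l`,
then for every `k`, `ξ_k^μ ∂_μ V_{ij} = λ_i V_{jk} + λ_j V_{ik} − Σ_l α^l V_{lk}` on `U`. -/
theorem quadCharge_algebra_closure {n m : ℕ} (hn : 1 ≤ n)
    (U : Set (Fin n → ℝ)) (hUopen : IsOpen U) (hUne : U.Nonempty)
    (g : (Fin n → ℝ) → Matrix (Fin n) (Fin n) ℝ) (hg : IsMetricOn U g)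
    (ξ : Fin m → (Fin n → ℝ) → Fin n → ℝ) (lam : Fin m → ℝ)
    (hξ : ∀ k : Fin m, IsHKVOn U g (ξ k) (lam k))
    (i j : Fin m) (α : Fin m → ℝ)
    (hcl : ∀ x ∈ U, ∀ ν : Fin n,
      (∑ σ : Fin n, ξ i x σ * covUp g (ξ j) σ ν x)
        + ∑ σ : Fin n, ξ j x σ * covUp g (ξ i) σ ν x
        = ∑ l : Fin m, α l * ξ l x ν) :
    ∀ k : Fin m, ∀ x ∈ U,
      ∑ μ : Fin n, ξ k x μ * pd (quadCharge g (ξ i) (ξ j)) μ x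
        = lam i * quadCharge g (ξ j) (ξ k) x + lam j * quadCharge g (ξ i) (ξ k) x
          - ∑ l : Fin m, α l * quadCharge g (ξ l) (ξ k) x := by
  intro k x hx
  have hgs := (hg.2.1 x hx)
  -- Step 1 : expand the derivative of the quadratic charge
  have hstep1 : ∑ μ : Fin n, ξ k x μ * pd (quadCharge g (ξ i) (ξ j)) μ x
      = (∑ μ : Fin n, ∑ ν : Fin n, ξ k x μ * (covUp g (ξ i) μ ν x * lowerIdx g (ξ j) ν x))
        + ∑ μ : Fin n, ∑ ν : Fin n, ξ k x μ * (ξ i x ν * covLow g (ξ j) μ ν x) := by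
    rw [← Finset.sum_add_distrib]
    refine Finset.sum_congr rfl fun μ _ => ?_
    rw [pd_quadCharge hUopen hg (hξ i).1 (hξ j).1 hx μ, mul_add, Finset.mul_sum,
      Finset.mul_sum]
  -- Step 2 : convert the covUp term into a covLow term
  have hT1 : ∑ μ : Fin n, ∑ ν : Fin n, ξ k x μ * (covUp g (ξ i) μ ν x * lowerIdx g (ξ j) ν x)
      = ∑ μ : Fin n, ∑ ν : Fin n, ξ k x μ * (ξ j x ν * covLow g (ξ i) μ ν x) := by
    refine Finset.sum_congr rfl fun μ _ => ?_
    have e1 : ∑ ν : Fin n, ξ k x μ * (covUp g (ξ i) μ ν x * lowerIdx g (ξ j) ν x)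
        = ∑ σ : Fin n, ξ k x μ * (ξ j x σ * ∑ ν : Fin n, g x σ ν * covUp g (ξ i) μ ν x) := by
      unfold lowerIdx
      simp only [Finset.mul_sum]
      rw [Finset.sum_comm]
      refine Finset.sum_congr rfl fun σ _ => Finset.sum_congr rfl fun ν _ => ?_
      rw [hgs.apply σ ν]; ring
    rw [e1]
    exact Finset.sum_congr rfl fun σ _ => by
      rw [← covLow_eq_contract hUopen hg (hξ i).1 hx μ σ]
  -- Step 3 : use the HKV property to flip covariant derivatives
  have hswap : ∀ a b : Fin m,
      ∑ μ : Fin n, ∑ ν : Fin n, ξ k x μ * (ξ b x ν * covLow g (ξ a) μ ν x)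
        = lam a * quadCharge g (ξ b) (ξ k) x
          - ∑ σ : Fin n, lowerIdx g (ξ k) σ x
              * (∑ ν : Fin n, ξ b x ν * covUp g (ξ a) ν σ x) := by
    intro a b
    have hkv := (hξ a).2 x hx
    have hq : ∑ μ : Fin n, ∑ ν : Fin n, ξ k x μ * (ξ b x ν * (lam a * g x μ ν))
        = lam a * quadCharge g (ξ b) (ξ k) x := by
      unfold quadCharge
      rw [Finset.mul_sum, Finset.sum_comm]
      refine Finset.sum_congr rfl fun p _ => ?_
      rw [Finset.mul_sum]
      refine Finset.sum_congr rfl fun q _ => ?_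
      rw [hgs.apply p q]; ring
    have hsub : ∑ μ : Fin n, ∑ ν : Fin n, ξ k x μ * (ξ b x ν * covLow g (ξ a) ν μ x)
        = ∑ σ : Fin n, lowerIdx g (ξ k) σ x
            * (∑ ν : Fin n, ξ b x ν * covUp g (ξ a) ν σ x) := by
      have e : ∀ ν μ' : Fin n, covLow g (ξ a) ν μ' x
          = ∑ σ : Fin n, g x μ' σ * covUp g (ξ a) ν σ x :=
        fun ν μ' => covLow_eq_contract hUopen hg (hξ a).1 hx ν μ'
      have rot : ∀ A : Fin n → Fin n → Fin n → ℝ,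
          ∑ μ : Fin n, ∑ ν : Fin n, ∑ σ : Fin n, A μ ν σ
            = ∑ σ : Fin n, ∑ μ : Fin n, ∑ ν : Fin n, A μ ν σ := by
        intro A
        calc ∑ μ : Fin n, ∑ ν : Fin n, ∑ σ : Fin n, A μ ν σ
            = ∑ μ : Fin n, ∑ σ : Fin n, ∑ ν : Fin n, A μ ν σ :=
              Finset.sum_congr rfl fun μ _ => Finset.sum_comm
          _ = ∑ σ : Fin n, ∑ μ : Fin n, ∑ ν : Fin n, A μ ν σ := Finset.sum_comm
      simp only [e]
      unfold lowerIdx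
      simp only [Finset.mul_sum, Finset.sum_mul]
      refine Eq.trans (rot fun μ ν σ => ξ k x μ * (ξ b x ν * (g x μ σ * covUp g (ξ a) ν σ x))) ?_
      refine Eq.trans (Finset.sum_congr rfl fun σ _ => Finset.sum_comm) ?_
      refine Finset.sum_congr rfl fun σ _ => Finset.sum_congr rfl fun ν _ =>
        Finset.sum_congr rfl fun μ _ => ?_
      rw [hgs.apply σ μ]; ring
    have hmain : ∑ μ : Fin n, ∑ ν : Fin n, ξ k x μ * (ξ b x ν * covLow g (ξ a) μ ν x)
        = (∑ μ : Fin n, ∑ ν : Fin n, ξ k x μ * (ξ b x ν * (lam a * g x μ ν)))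
          - ∑ μ : Fin n, ∑ ν : Fin n, ξ k x μ * (ξ b x ν * covLow g (ξ a) ν μ x) := by
      rw [← Finset.sum_sub_distrib]
      refine Finset.sum_congr rfl fun μ _ => ?_
      rw [← Finset.sum_sub_distrib]
      refine Finset.sum_congr rfl fun ν _ => ?_
      linear_combination (ξ k x μ * ξ b x ν) * hkv μ ν
    rw [hmain, hq, hsub]
  -- Step 4 : combine with the closure hypothesis
  have hfin : (∑ σ : Fin n, lowerIdx g (ξ k) σ x
        * (∑ ν : Fin n, ξ j x ν * covUp g (ξ i) ν σ x))
      + ∑ σ : Fin n, lowerIdx g (ξ k) σ x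
          * (∑ ν : Fin n, ξ i x ν * covUp g (ξ j) ν σ x)
      = ∑ l : Fin m, α l * quadCharge g (ξ l) (ξ k) x := by
    rw [← Finset.sum_add_distrib]
    have e1 : ∀ σ : Fin n, lowerIdx g (ξ k) σ x
          * (∑ ν : Fin n, ξ j x ν * covUp g (ξ i) ν σ x)
        + lowerIdx g (ξ k) σ x * (∑ ν : Fin n, ξ i x ν * covUp g (ξ j) ν σ x)
        = lowerIdx g (ξ k) σ x * ∑ l : Fin m, α l * ξ l x σ := by
      intro σ
      rw [← mul_add, add_comm (∑ ν : Fin n, ξ j x ν * covUp g (ξ i) ν σ x), hcl x hx σ]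
    simp only [e1]
    simp only [Finset.mul_sum]
    rw [Finset.sum_comm]
    refine Finset.sum_congr rfl fun l _ => ?_
    unfold quadCharge lowerIdx
    simp only [Finset.mul_sum, Finset.sum_mul]
    refine Finset.sum_congr rfl fun p _ => Finset.sum_congr rfl fun q _ => by ring
  rw [hstep1, hT1, hswap i j, hswap j i, ← hfin]
  ring
end
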